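/- Let c be a Coxeter element in the Weyl group of an affine root system of rank n. Then c, acting on V, has a linearly independent set of n−2 eigenvectors whose eigenvalues are roots of unity different from 1. -/

import Mathlib

open scoped BigOperators

noncomputable section

/-- A symmetrizable generalized Cartan matrix of affine type, together with the
coefficient vector `dz` of the primitive positive imaginary root `δ` spanning the
(one dimensional) kernel of the associated symmetric bilinear form. -/
structure AffineGCM (n : ℕ) where
  /-- the generalized Cartan matrix -/
  a : Matrix (Fin n) (Fin n) ℤ
  /-- symmetrizing factors -/
  d : Fin n → ℝ
  diag : ∀ i, a i i = 2
  offdiag : ∀ i j, i ≠ j → a i j ≤ 0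
  d_pos : ∀ i, 0 < d i
  symmetrizable : ∀ i j, d i * (a i j : ℝ) = d j * (a j i : ℝ)
  /-- `K` is positive semidefinite (on the real span of the simple roots) -/
  posSemidef : ∀ g : Fin n → ℝ, 0 ≤ ∑ i, ∑ j, g i * g j * (d i * (a i j : ℝ))
  /-- `K` is not positive definite -/
  not_posDef : ∃ g : Fin n → ℝ, g ≠ 0 ∧ ∑ i, ∑ j, g i * g j * (d i * (a i j : ℝ)) = 0
  /-- the restriction of `K` to the span of every proper subset of the simple roots
  is positive definite -/
  proper_posDef : ∀ J : Finset (Fin n), J ≠ Finset.univ →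
    ∀ g : Fin n → ℝ, (∀ i, i ∉ J → g i = 0) → g ≠ 0 →
      0 < ∑ i, ∑ j, g i * g j * (d i * (a i j : ℝ))
  /-- coordinates of the positive imaginary root `δ` in the basis of simple roots -/
  dz : Fin n → ℤ
  dz_pos : ∀ i, 0 < dz i
  /-- `δ` is the imaginary root closest to the origin: its coordinates are coprime -/
  dz_prim : Finset.univ.gcd dz = 1
  /-- `δ` spans the kernel of `K` -/
  dz_ker : ∀ j, ∑ i, (dz i : ℝ) * (d i * (a i j : ℝ)) = 0

namespace AffineGCM

variable {n : ℕ}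

/-- The ambient vector space `V`, with the simple roots as standard basis. -/
abbrev V (n : ℕ) := Fin n → ℂ

/-- the simple root `α i` (the `i`-th standard basis vector) -/
def α (i : Fin n) : V n := Pi.single i 1

/-- a vector is *positive* if it lies in the nonnegative real span of the simple roots -/
def IsPosRoot (v : V n) : Prop := ∀ i, 0 ≤ (v i).re ∧ (v i).im = 0

/-- a vector is *negative* if it lies in the nonpositive real span of the simple roots -/
def IsNegRoot (v : V n) : Prop := ∀ i, (v i).re ≤ 0 ∧ (v i).im = 0

/-- the `g`-orbit of `x`: all `g ^ k • x` for integers `k` -/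
def orbit (g : V n ≃ₗ[ℂ] V n) (x : V n) : Set (V n) := Set.range fun k : ℤ => (g ^ k) x

/-- `U g`: the span of all eigenvectors of `g`, i.e. the direct sum of its eigenspaces -/
def eigSpan (g : V n ≃ₗ[ℂ] V n) : Submodule ℂ (V n) :=
  ⨆ μ : ℂ, Module.End.eigenspace (g : Module.End ℂ (V n)) μ

/-- the span `V_fin` of the simple roots other than `α aff` -/
def Vfin (aff : Fin n) : Submodule ℂ (V n) :=
  Submodule.span ℂ (α '' {i : Fin n | i ≠ aff})

variable (C : AffineGCM n)

/-- the simple coroot `α i ^ ∨ = (d i)⁻¹ • α i` -/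
def coroot (i : Fin n) : V n := ((C.d i : ℂ))⁻¹ • α i

/-- The symmetric bilinear form `K`, determined by `K (coroot i) (α j) = a i j`,
that is, `K (α i) (α j) = d i * a i j`. -/
def K : V n →ₗ[ℂ] V n →ₗ[ℂ] ℂ :=
  LinearMap.mk₂ ℂ
    (fun x y => ∑ i, ∑ j, x i * y j * ((C.d i : ℂ) * (C.a i j : ℂ)))
    (fun x x' y => by
      simp only [Pi.add_apply, add_mul, Finset.sum_add_distrib])
    (fun r x y => by
      simp only [Pi.smul_apply, smul_eq_mul, Finset.mul_sum]
      exact Finset.sum_congr rfl fun i _ => Finset.sum_congr rfl fun j _ => by ring)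
    (fun x y y' => by
      simp only [Pi.add_apply, mul_add, add_mul, Finset.sum_add_distrib])
    (fun r x y => by
      simp only [Pi.smul_apply, smul_eq_mul, Finset.mul_sum]
      exact Finset.sum_congr rfl fun i _ => Finset.sum_congr rfl fun j _ => by ring)

/-- the linear map `v ↦ v - K x v • y`; reflections are special cases -/
def reflMap (x y : V n) : V n →ₗ[ℂ] V n where
  toFun v := v - C.K x v • y
  map_add' u v := by simp only [map_add, add_smul]; abel
  map_smul' r u := by simp only [map_smul, smul_eq_mul, RingHom.id_apply, smul_sub, smul_smul]

lemma reflMap_apply (x y v : V n) : C.reflMap x y v = v - C.K x v • y := rfl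

/-- the simple reflection `s i` as a linear endomorphism -/
def sLin (i : Fin n) : V n →ₗ[ℂ] V n := C.reflMap (C.coroot i) (α i)

lemma K_α_α (i j : Fin n) : C.K (α i) (α j) = (C.d i : ℂ) * (C.a i j : ℂ) := by
  simp [K, α, LinearMap.mk₂_apply, Pi.single_apply, ite_mul, zero_mul,
    Finset.sum_ite_eq', Finset.mem_univ]

lemma K_coroot_α (i j : Fin n) : C.K (C.coroot i) (α j) = (C.a i j : ℂ) := by
  have hd : (C.d i : ℂ) ≠ 0 := by exact_mod_cast ne_of_gt (C.d_pos i)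
  simp only [coroot, map_smul, LinearMap.smul_apply, smul_eq_mul, K_α_α]
  field_simp

lemma sLin_invol (i : Fin n) (v : V n) : C.sLin i (C.sLin i v) = v := by
  have h2 : C.K (C.coroot i) (α i) = 2 := by
    rw [K_coroot_α, C.diag]; norm_num
  simp only [sLin, reflMap_apply, map_sub, map_smul, h2, smul_eq_mul]
  module

/-- the simple reflection `s i` -/
def s (i : Fin n) : V n ≃ₗ[ℂ] V n :=
  LinearEquiv.ofLinear (C.sLin i) (C.sLin i)
    (LinearMap.ext fun v => C.sLin_invol i v) (LinearMap.ext fun v => C.sLin_invol i v)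

/-- the Weyl group `W`, as a subgroup of the group of linear automorphisms of `V` -/
def Wgroup : Subgroup (V n ≃ₗ[ℂ] V n) := Subgroup.closure (Set.range C.s)

/-- the Coxeter element `c = s 1 * s 2 * ⋯ * s n` -/
def cox : V n ≃ₗ[ℂ] V n := (List.ofFn C.s).prod

/-- the positive imaginary root `δ` -/
def δv : V n := fun i => ((C.dz i : ℤ) : ℂ)

/-- the set of real roots: `W`-images of the simple roots -/
def realRoots : Set (V n) := {v | ∃ w ∈ C.Wgroup, ∃ i, w (α i) = v}

/-- the root system `Φ`: real roots together with the imaginary roots `k • δ`, `k ≠ 0` -/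
def Φ : Set (V n) := C.realRoots ∪ {v | ∃ k : ℤ, k ≠ 0 ∧ v = (k : ℂ) • C.δv}

/-- `T→ = {α 1, s 1 α 2, …, s 1 ⋯ s (n-1) α n}` -/
def Tproj : Set (V n) :=
  Set.range fun k : Fin n => ((List.ofFn C.s).take k.val).prod (α k)

/-- `T← = {α n, s n α (n-1), …, s n ⋯ s 2 α 1}` -/
def Tinj : Set (V n) :=
  Set.range fun k : Fin n => ((List.ofFn C.s).reverse.take (n - 1 - k.val)).prod (α k)

/-- `Φ_fin`, the finite root system `Φ ∩ V_fin` -/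
def Φfin (aff : Fin n) : Set (V n) := C.Φ ∩ (Vfin aff : Set (V n))

/-- the root `θ = δ - [δ : α aff] • α aff` of `Φ_fin` -/
def θv (aff : Fin n) : V n := C.δv - ((C.dz aff : ℤ) : ℂ) • α aff

/-- the reflection `t β : v ↦ v - K (β^∨) v • β` in a (real) root `β`,
where `β^∨ = (2 / K β β) • β` -/
def tRefl (β : V n) : V n →ₗ[ℂ] V n := C.reflMap ((2 / C.K β β) • β) β

/-- `c_◁ = s 1 * ⋯ * s (aff - 1)` -/
def cleft (aff : Fin n) : V n →ₗ[ℂ] V n := ((List.ofFn C.sLin).take aff.val).prod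

/-- `c_▷ = s (aff + 1) * ⋯ * s n` -/
def cright (aff : Fin n) : V n →ₗ[ℂ] V n := ((List.ofFn C.sLin).drop (aff.val + 1)).prod

/-- `Υ^fin = Φ_fin ∩ U c` -/
def Υfin (aff : Fin n) : Set (V n) := C.Φfin aff ∩ (eigSpan C.cox : Set (V n))

/-- `B` is a simple system for a set `Θ` of roots: a linearly independent subset of `Θ`
such that every element of `Θ` is a nonnegative or a nonpositive combination of `B`. -/
def IsSimpleSystem (Θ : Set (V n)) (B : Finset (V n)) : Prop :=
  ↑B ⊆ Θ ∧ LinearIndependent ℂ (fun b : B => (b : V n)) ∧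
    ∀ v ∈ Θ, ∃ g : V n → ℝ, ((∀ b ∈ B, 0 ≤ g b) ∨ (∀ b ∈ B, g b ≤ 0)) ∧
      v = ∑ b ∈ B, (g b : ℂ) • b

/-- two roots of `Θ` are connected if they are joined by a chain of roots of `Θ`
that are pairwise non-orthogonal (with respect to `K`) -/
def Connected (Θ : Set (V n)) (x y : V n) : Prop :=
  Relation.ReflTransGen (fun u v => u ∈ Θ ∧ v ∈ Θ ∧ C.K u v ≠ 0) x y

/-- the irreducible component of `x` in `Θ` -/
def component (Θ : Set (V n)) (x : V n) : Set (V n) := {y | y ∈ Θ ∧ C.Connected Θ x y}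

/-- a set of roots is of finite type `A` if it consists exactly of the vectors
`±(β i + β (i+1) + ⋯ + β j)` for a linearly independent family `β 1, …, β k` -/
def IsTypeA (Θ : Set (V n)) : Prop :=
  ∃ (k : ℕ) (β : Fin k → V n), LinearIndependent ℂ β ∧ (∀ i, β i ∈ Θ) ∧
    Θ = {v | ∃ i j : Fin k, i ≤ j ∧
      (v = ∑ l ∈ Finset.Icc i j, β l ∨ v = -∑ l ∈ Finset.Icc i j, β l)}

/-- `Ω = {β 1, t (β 1) (β 2), …, t (β 1) ⋯ t (β (m-1)) (β m)}` for an ordered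
tuple `β` of roots -/
def Ωset {m : ℕ} (β : Fin m → V n) : Set (V n) :=
  Set.range fun j : Fin m => (((List.ofFn fun i => C.tRefl (β i)).take j.val).prod) (β j)

/-- `s i` is initial in a Coxeter element `c` if `c` is the product of a permutation
of all the simple reflections starting with `s i` -/
def IsInitial (i : Fin n) (c : V n ≃ₗ[ℂ] V n) : Prop :=
  ∃ l : List (Fin n), (i :: l).Perm (List.finRange n) ∧ ((i :: l).map C.s).prod = c

/-- `s i` is final in a Coxeter element `c` if `c` is the product of a permutation
of all the simple reflections ending with `s i` -/
def IsFinal (i : Fin n) (c : V n ≃ₗ[ℂ] V n) : Prop :=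
  ∃ l : List (Fin n), (l ++ [i]).Perm (List.finRange n) ∧ ((l ++ [i]).map C.s).prod = c

/-- the skew-symmetric bilinear form `ω_c`, determined by
`ω_c (coroot i) (α j) = a i j` if `i > j`, `= 0` if `i = j`, `= -a i j` if `i < j` -/
def ω : V n →ₗ[ℂ] V n →ₗ[ℂ] ℂ :=
  LinearMap.mk₂ ℂ
    (fun x y => ∑ i, ∑ j, x i * y j *
      ((if j < i then 1 else if i = j then 0 else -1) * ((C.d i : ℂ) * (C.a i j : ℂ))))
    (fun x x' y => by
      simp only [Pi.add_apply, add_mul, Finset.sum_add_distrib])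
    (fun r x y => by
      simp only [Pi.smul_apply, smul_eq_mul, Finset.mul_sum]
      exact Finset.sum_congr rfl fun i _ => Finset.sum_congr rfl fun j _ => by ring)
    (fun x y y' => by
      simp only [Pi.add_apply, mul_add, add_mul, Finset.sum_add_distrib])
    (fun r x y => by
      simp only [Pi.smul_apply, smul_eq_mul, Finset.mul_sum]
      exact Finset.sum_congr rfl fun i _ => Finset.sum_congr rfl fun j _ => by ring)


/-! ### Auxiliary material for Proposition 3.1(3) -/

section Prop313

lemma K_apply' (x y : V n) :
    C.K x y = ∑ i, ∑ j, x i * y j * ((C.d i : ℂ) * (C.a i j : ℂ)) := rfl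

lemma m_symmC (i j : Fin n) :
    (C.d i : ℂ) * (C.a i j : ℂ) = (C.d j : ℂ) * (C.a j i : ℂ) := by
  have h2 : ((C.d i * (C.a i j : ℝ) : ℝ) : ℂ) = ((C.d j * (C.a j i : ℝ) : ℝ) : ℂ) :=
    congrArg Complex.ofReal (C.symmetrizable i j)
  push_cast at h2
  exact h2

lemma K_symm' (x y : V n) : C.K x y = C.K y x := by
  rw [K_apply', K_apply', Finset.sum_comm]
  refine Finset.sum_congr rfl fun j _ => Finset.sum_congr rfl fun i _ => ?_
  rw [C.m_symmC i j]; ring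

lemma K_coroot_apply (i : Fin n) (v : V n) :
    C.K (C.coroot i) v = ∑ j, (C.a i j : ℂ) * v j := by
  have hd : (C.d i : ℂ) ≠ 0 := by exact_mod_cast (C.d_pos i).ne'
  have hco : ∀ k, C.coroot i k = if k = i then (C.d i : ℂ)⁻¹ else 0 := by
    intro k
    simp [coroot, α, Pi.single_apply, mul_ite, mul_one, mul_zero]
  rw [K_apply']
  simp only [hco, ite_mul, zero_mul]
  rw [Finset.sum_comm]
  refine Finset.sum_congr rfl fun j _ => ?_
  rw [Finset.sum_ite_eq' Finset.univ i fun k => (C.d i : ℂ)⁻¹ * v j * ((C.d k : ℂ) * (C.a k j : ℂ))]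
  simp only [Finset.mem_univ, if_true]
  field_simp

lemma K_alpha_left (i : Fin n) (y : V n) :
    C.K (α i) y = (C.d i : ℂ) * C.K (C.coroot i) y := by
  rw [K_apply', K_coroot_apply, Finset.mul_sum, Finset.sum_comm]
  refine Finset.sum_congr rfl fun j _ => ?_
  simp only [α, Pi.single_apply, ite_mul, one_mul, zero_mul]
  rw [Finset.sum_ite_eq' Finset.univ i fun k => y j * ((C.d k : ℂ) * (C.a k j : ℂ))]
  simp only [Finset.mem_univ, if_true]
  ring

lemma K_alpha_right (i : Fin n) (x : V n) :
    C.K x (α i) = (C.d i : ℂ) * C.K (C.coroot i) x := by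
  rw [K_apply', K_coroot_apply, Finset.mul_sum]
  refine Finset.sum_congr rfl fun k _ => ?_
  simp only [α, Pi.single_apply, mul_ite, ite_mul, mul_zero, zero_mul, mul_one]
  rw [Finset.sum_ite_eq' Finset.univ i fun j => x k * ((C.d k : ℂ) * (C.a k j : ℂ))]
  simp only [Finset.mem_univ, if_true]
  rw [C.m_symmC k i]
  ring

lemma sLin_apply (i : Fin n) (v : V n) :
    C.sLin i v = v - C.K (C.coroot i) v • α i := rfl

lemma sLin_apply_coord (i : Fin n) (v : V n) (k : Fin n) :
    C.sLin i v k = v k - C.K (C.coroot i) v * (if k = i then 1 else 0) := by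
  rw [sLin_apply]
  simp [α, Pi.single_apply]

lemma K_sLin (i : Fin n) (x y : V n) :
    C.K (C.sLin i x) (C.sLin i y) = C.K x y := by
  have h2 : C.K (α i) (α i) = 2 * (C.d i : ℂ) := by
    rw [C.K_α_α, C.diag]; push_cast; ring
  rw [sLin_apply, sLin_apply]
  simp only [map_sub, map_smul, LinearMap.sub_apply, LinearMap.smul_apply, smul_eq_mul]
  rw [C.K_alpha_right i x, C.K_alpha_left i y, h2]
  ring

/-- the product of the simple reflections listed in `l` -/
def SL (l : List (Fin n)) : V n →ₗ[ℂ] V n := (l.map C.sLin).prod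

lemma SL_nil : C.SL ([] : List (Fin n)) = 1 := by simp [SL]

lemma SL_cons (i : Fin n) (l : List (Fin n)) (v : V n) :
    C.SL (i :: l) v = C.sLin i (C.SL l v) := by
  simp [SL, List.prod_cons, Module.End.mul_apply]

lemma K_SL (l : List (Fin n)) (x y : V n) :
    C.K (C.SL l x) (C.SL l y) = C.K x y := by
  induction l with
  | nil => simp [SL_nil]
  | cons i l ih => rw [SL_cons, SL_cons, K_sLin, ih]

lemma SL_coord (l : List (Fin n)) (v : V n) {j : Fin n} (hj : j ∉ l) :
    C.SL l v j = v j := by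
  induction l with
  | nil => simp [SL_nil]
  | cons i l ih =>
    have hji : j ≠ i := by
      intro h; exact hj (h ▸ List.mem_cons_self)
    have hjl : j ∉ l := fun h => hj (List.mem_cons_of_mem _ h)
    rw [SL_cons, sLin_apply_coord, if_neg hji, mul_zero, sub_zero, ih hjl]

lemma K_coroot_zero_of_fixed :
    ∀ l : List (Fin n), l.Nodup → ∀ v : V n, C.SL l v = v →
      ∀ i ∈ l, C.K (C.coroot i) v = 0 := by
  intro l
  induction l with
  | nil => intro _ v _ i hi; exact absurd hi List.not_mem_nil
  | cons i l ih =>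
    intro hnd v hv j hj
    have hil : i ∉ l := (List.nodup_cons.mp hnd).1
    have hK0 : C.K (C.coroot i) (C.SL l v) = 0 := by
      have h1 : C.sLin i (C.SL l v) i = v i := by
        rw [← SL_cons, hv]
      rw [sLin_apply_coord, if_pos rfl, mul_one, C.SL_coord l v hil] at h1
      exact sub_eq_self.mp h1
    have hw : C.SL l v = v := by
      have h3 : C.sLin i (C.SL l v) = C.SL l v := by
        rw [sLin_apply, hK0, zero_smul, sub_zero]
      rw [SL_cons, h3] at hv
      exact hv
    rcases List.mem_cons.mp hj with rfl | hjl
    · rw [← hw]; exact hK0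
    · exact ih (List.nodup_cons.mp hnd).2 v hw j hjl

lemma prod_s_eq_SL (l : List (Fin n)) (v : V n) :
    ((l.map C.s).prod : V n ≃ₗ[ℂ] V n) v = C.SL l v := by
  induction l with
  | nil => simp [SL_nil]
  | cons i l ih =>
    rw [List.map_cons, List.prod_cons, SL_cons, ← ih]
    rfl

lemma cox_eq_SL (v : V n) : C.cox v = C.SL (List.finRange n) v := by
  show ((List.ofFn C.s).prod : V n ≃ₗ[ℂ] V n) v = _
  rw [List.ofFn_eq_map]
  exact C.prod_s_eq_SL _ v

lemma K_coroot_zero_of_cox_fixed {v : V n} (hv : C.cox v = v) (i : Fin n) :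
    C.K (C.coroot i) v = 0 := by
  refine C.K_coroot_zero_of_fixed (List.finRange n) (List.nodup_finRange n) v ?_ i
    (List.mem_finRange i)
  rw [← C.cox_eq_SL]; exact hv

/-! #### real positive semidefiniteness -/

lemma dz_right_ker_real (i : Fin n) : ∑ j, (C.a i j : ℝ) * (C.dz j : ℝ) = 0 := by
  have hd : C.d i ≠ 0 := (C.d_pos i).ne'
  have key : ∑ j, (C.a i j : ℝ) * (C.dz j : ℝ)
      = (C.d i)⁻¹ * ∑ j, (C.dz j : ℝ) * (C.d j * (C.a j i : ℝ)) := by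
    rw [Finset.mul_sum]
    refine Finset.sum_congr rfl fun j _ => ?_
    have hs := C.symmetrizable i j
    field_simp
    linear_combination (C.dz j : ℝ) * hs
  rw [key, C.dz_ker i, mul_zero]

/-- if the quadratic form vanishes at a real vector, the vector is in the kernel -/
lemma radical_real (x : Fin n → ℝ)
    (hQ : ∑ i, ∑ j, x i * x j * (C.d i * (C.a i j : ℝ)) = 0) :
    ∀ k, ∑ j, (C.a k j : ℝ) * x j = 0 := by
  set M : Matrix (Fin n) (Fin n) ℝ := Matrix.of fun i j => C.d i * (C.a i j : ℝ) with hM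
  have hherm : M.IsHermitian := by
    ext i j
    simp only [Matrix.conjTranspose_apply, hM, Matrix.of_apply, star_trivial]
    exact (C.symmetrizable j i)
  have hdot : ∀ g : Fin n → ℝ, dotProduct (star g) (M.mulVec g)
      = ∑ i, ∑ j, g i * g j * (C.d i * (C.a i j : ℝ)) := by
    intro g
    simp only [star_trivial, dotProduct, Matrix.mulVec, hM, Matrix.of_apply]
    refine Finset.sum_congr rfl fun i _ => ?_
    rw [Finset.mul_sum]
    refine Finset.sum_congr rfl fun j _ => ?_
    ring
  have hpsd : M.PosSemidef := by
    refine Matrix.posSemidef_iff_dotProduct_mulVec.mpr ⟨hherm, fun g => ?_⟩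
    rw [hdot]
    exact C.posSemidef g
  have hx0 : M.mulVec x = 0 := by
    refine (hpsd.dotProduct_mulVec_zero_iff x).mp ?_
    show dotProduct (star x) (M.mulVec x) = 0
    rw [hdot]; exact hQ
  intro k
  have hk := congrFun hx0 k
  simp only [Matrix.mulVec, dotProduct, hM, Matrix.of_apply, Pi.zero_apply] at hk
  have hdk : C.d k ≠ 0 := (C.d_pos k).ne'
  have : C.d k * ∑ j, (C.a k j : ℝ) * x j = 0 := by
    rw [Finset.mul_sum]
    rw [← hk]
    refine Finset.sum_congr rfl fun j _ => by ring
  exact (mul_eq_zero.mp this).resolve_left hdk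

/-- a real vector in the kernel is a multiple of `dz` -/
lemma ker_real (hn : 0 < n) (x : Fin n → ℝ)
    (hx : ∀ i, ∑ j, (C.a i j : ℝ) * x j = 0) :
    ∃ t : ℝ, ∀ i, x i = t * (C.dz i : ℝ) := by
  set i0 : Fin n := ⟨0, hn⟩
  have hdz0 : (C.dz i0 : ℝ) ≠ 0 := by exact_mod_cast (C.dz_pos i0).ne'
  set t : ℝ := x i0 / (C.dz i0 : ℝ) with ht
  set w : Fin n → ℝ := fun i => x i - t * (C.dz i : ℝ) with hwdef
  have hw0 : w i0 = 0 := by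
    simp only [hwdef, ht]
    field_simp
    ring
  have hker : ∀ i, ∑ j, (C.a i j : ℝ) * w j = 0 := by
    intro i
    have : ∑ j, (C.a i j : ℝ) * w j
        = (∑ j, (C.a i j : ℝ) * x j) - t * ∑ j, (C.a i j : ℝ) * (C.dz j : ℝ) := by
      rw [Finset.mul_sum, ← Finset.sum_sub_distrib]
      refine Finset.sum_congr rfl fun j _ => ?_
      simp only [hwdef]; ring
    rw [this, hx i, C.dz_right_ker_real i]
    ring
  by_cases hw : w = 0
  · refine ⟨t, fun i => ?_⟩
    have := congrFun hw i
    simp only [hwdef, Pi.zero_apply] at this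
    linarith
  · exfalso
    set J : Finset (Fin n) := Finset.univ.erase i0 with hJ
    have hJne : J ≠ Finset.univ := by
      intro h
      have : i0 ∈ J := h ▸ Finset.mem_univ i0
      exact (Finset.notMem_erase i0 Finset.univ) this
    have hsupp : ∀ i, i ∉ J → w i = 0 := by
      intro i hi
      have : i = i0 := by
        by_contra hne
        exact hi (Finset.mem_erase.mpr ⟨hne, Finset.mem_univ i⟩)
      rw [this]; exact hw0
    have hpos := C.proper_posDef J hJne w hsupp hw
    have hzero : ∑ i, ∑ j, w i * w j * (C.d i * (C.a i j : ℝ)) = 0 := by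
      have : ∀ i, ∑ j, w i * w j * (C.d i * (C.a i j : ℝ))
          = (w i * C.d i) * ∑ j, (C.a i j : ℝ) * w j := by
        intro i
        rw [Finset.mul_sum]
        exact Finset.sum_congr rfl fun j _ => by ring
      rw [Finset.sum_congr rfl fun i _ => this i]
      refine Finset.sum_eq_zero fun i _ => ?_
      rw [hker i, mul_zero]
    rw [hzero] at hpos
    exact lt_irrefl 0 hpos

/-- a complex vector in the kernel of `A` is a multiple of `δ` -/
lemma ker_complex (hn : 0 < n) (v : V n)
    (hre : ∀ i, ∑ j, (C.a i j : ℝ) * (v j).re = 0)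
    (him : ∀ i, ∑ j, (C.a i j : ℝ) * (v j).im = 0) :
    ∃ z : ℂ, v = z • C.δv := by
  obtain ⟨t, hti⟩ := C.ker_real hn _ hre
  obtain ⟨s, hsi⟩ := C.ker_real hn _ him
  refine ⟨⟨t, s⟩, ?_⟩
  funext k
  apply Complex.ext
  · simp only [Pi.smul_apply, δv, smul_eq_mul, Complex.mul_re, Complex.intCast_re,
      Complex.intCast_im, mul_zero, sub_zero]
    exact hti k
  · simp only [Pi.smul_apply, δv, smul_eq_mul, Complex.mul_im, Complex.intCast_re,
      Complex.intCast_im, mul_zero, add_zero]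
    rw [zero_add]
    exact hsi k

lemma fixed_smul_delta (hn : 0 < n) {v : V n} (hv : C.cox v = v) :
    ∃ z : ℂ, v = z • C.δv := by
  have hK : ∀ i, ∑ j, (C.a i j : ℂ) * v j = 0 := by
    intro i
    rw [← C.K_coroot_apply]
    exact C.K_coroot_zero_of_cox_fixed hv i
  refine C.ker_complex hn v (fun i => ?_) (fun i => ?_)
  · have := congrArg Complex.re (hK i)
    rw [Complex.re_sum] at this
    simpa [Complex.mul_re] using this
  · have := congrArg Complex.im (hK i)
    rw [Complex.im_sum] at this
    simpa [Complex.mul_im] using this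

/-! #### the hermitian form -/

/-- coordinatewise complex conjugation -/
def cvec (v : V n) : V n := fun i => (starRingEnd ℂ) (v i)

/-- the positive semidefinite hermitian form associated with `K` -/
def Hf (x y : V n) : ℂ := C.K (cvec x) y

lemma Hf_apply (x y : V n) :
    C.Hf x y = ∑ i, ∑ j, (starRingEnd ℂ) (x i) * y j * ((C.d i : ℂ) * (C.a i j : ℂ)) := rfl

lemma cvec_add (x y : V n) : cvec (x + y) = cvec x + cvec y := by
  funext i; simp [cvec]

lemma cvec_smul (z : ℂ) (x : V n) : cvec (z • x) = (starRingEnd ℂ) z • cvec x := by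
  funext i; simp [cvec]

lemma Hf_add_left (x x' y : V n) : C.Hf (x + x') y = C.Hf x y + C.Hf x' y := by
  unfold Hf; rw [cvec_add, map_add, LinearMap.add_apply]

lemma Hf_add_right (x y y' : V n) : C.Hf x (y + y') = C.Hf x y + C.Hf x y' := by
  unfold Hf; rw [map_add]

lemma Hf_smul_left (z : ℂ) (x y : V n) :
    C.Hf (z • x) y = (starRingEnd ℂ) z * C.Hf x y := by
  unfold Hf; rw [cvec_smul, map_smul, LinearMap.smul_apply, smul_eq_mul]

lemma Hf_smul_right (z : ℂ) (x y : V n) : C.Hf x (z • y) = z * C.Hf x y := by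
  unfold Hf; rw [map_smul, smul_eq_mul]

lemma Hf_conj (x y : V n) : (starRingEnd ℂ) (C.Hf x y) = C.Hf y x := by
  rw [Hf_apply, Hf_apply, map_sum]
  rw [Finset.sum_comm]
  refine Finset.sum_congr rfl fun j _ => ?_
  rw [map_sum]
  refine Finset.sum_congr rfl fun i _ => ?_
  simp only [map_mul, Complex.conj_conj, map_intCast, Complex.conj_ofReal]
  rw [C.m_symmC i j]
  ring

lemma Hf_self_im (v : V n) : (C.Hf v v).im = 0 := by
  have h := C.Hf_conj v v
  exact Complex.conj_eq_iff_im.mp h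

lemma Hf_self_re (v : V n) :
    (C.Hf v v).re = (∑ i, ∑ j, (v i).re * (v j).re * (C.d i * (C.a i j : ℝ)))
      + ∑ i, ∑ j, (v i).im * (v j).im * (C.d i * (C.a i j : ℝ)) := by
  rw [Hf_apply, Complex.re_sum, ← Finset.sum_add_distrib]
  refine Finset.sum_congr rfl fun i _ => ?_
  rw [Complex.re_sum, ← Finset.sum_add_distrib]
  refine Finset.sum_congr rfl fun j _ => ?_
  simp [Complex.mul_re, Complex.mul_im]
  ring

lemma Hf_self_nonneg (v : V n) : 0 ≤ (C.Hf v v).re := by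
  rw [Hf_self_re]
  exact add_nonneg (C.posSemidef _) (C.posSemidef _)

lemma Hf_self_eq_zero (hn : 0 < n) {v : V n} (h : C.Hf v v = 0) :
    ∃ z : ℂ, v = z • C.δv := by
  have hre : (C.Hf v v).re = 0 := by rw [h]; rfl
  rw [Hf_self_re] at hre
  have h1 : ∑ i, ∑ j, (v i).re * (v j).re * (C.d i * (C.a i j : ℝ)) = 0 := by
    have := C.posSemidef fun i => (v i).re
    have := C.posSemidef fun i => (v i).im
    linarith
  have h2 : ∑ i, ∑ j, (v i).im * (v j).im * (C.d i * (C.a i j : ℝ)) = 0 := by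
    have := C.posSemidef fun i => (v i).re
    have := C.posSemidef fun i => (v i).im
    linarith
  exact C.ker_complex hn v (C.radical_real _ h1) (C.radical_real _ h2)

lemma cvec_sLin (i : Fin n) (v : V n) : cvec (C.sLin i v) = C.sLin i (cvec v) := by
  have hK : (starRingEnd ℂ) (C.K (C.coroot i) v) = C.K (C.coroot i) (cvec v) := by
    rw [K_coroot_apply, K_coroot_apply, map_sum]
    refine Finset.sum_congr rfl fun j _ => ?_
    simp [cvec, map_mul]
  funext k
  show (starRingEnd ℂ) (C.sLin i v k) = C.sLin i (cvec v) k
  rw [sLin_apply_coord, sLin_apply_coord, map_sub, map_mul, hK,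
    apply_ite (starRingEnd ℂ), map_one, map_zero]
  rfl

lemma Hf_sLin (i : Fin n) (x y : V n) :
    C.Hf (C.sLin i x) (C.sLin i y) = C.Hf x y := by
  unfold Hf
  rw [cvec_sLin, K_sLin]

lemma Hf_SL (l : List (Fin n)) (x y : V n) :
    C.Hf (C.SL l x) (C.SL l y) = C.Hf x y := by
  induction l with
  | nil => simp [SL_nil]
  | cons i l ih => rw [SL_cons, SL_cons, Hf_sLin, ih]

lemma Hf_cox (x y : V n) : C.Hf (C.cox x) (C.cox y) = C.Hf x y := by
  rw [C.cox_eq_SL x, C.cox_eq_SL y, Hf_SL]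

lemma dz_ker_complex (j : Fin n) :
    ∑ i, (C.dz i : ℂ) * ((C.d i : ℂ) * (C.a i j : ℂ)) = 0 := by
  have h := C.dz_ker j
  have h2 : ((∑ i, (C.dz i : ℝ) * (C.d i * (C.a i j : ℝ)) : ℝ) : ℂ) = 0 := by
    rw [h]; simp
  push_cast at h2
  exact h2

lemma Hf_delta_left (x : V n) : C.Hf C.δv x = 0 := by
  rw [Hf_apply, Finset.sum_comm]
  refine Finset.sum_eq_zero fun j _ => ?_
  have : ∑ i, (starRingEnd ℂ) (C.δv i) * x j * ((C.d i : ℂ) * (C.a i j : ℂ))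
      = x j * ∑ i, (C.dz i : ℂ) * ((C.d i : ℂ) * (C.a i j : ℂ)) := by
    rw [Finset.mul_sum]
    refine Finset.sum_congr rfl fun i _ => ?_
    simp only [δv, map_intCast]
    ring
  rw [this, C.dz_ker_complex j, mul_zero]

lemma sLin_delta (i : Fin n) : C.sLin i C.δv = C.δv := by
  have hK : C.K (C.coroot i) C.δv = 0 := by
    rw [K_coroot_apply]
    have h := C.dz_right_ker_real i
    have h2 : ((∑ j, (C.a i j : ℝ) * (C.dz j : ℝ) : ℝ) : ℂ) = 0 := by rw [h]; simp
    push_cast at h2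
    exact h2
  rw [sLin_apply, hK, zero_smul, sub_zero]

lemma SL_delta (l : List (Fin n)) : C.SL l C.δv = C.δv := by
  induction l with
  | nil => simp [SL_nil]
  | cons i l ih => rw [SL_cons, ih, sLin_delta]

lemma cox_delta : C.cox C.δv = C.δv := by
  rw [C.cox_eq_SL, SL_delta]

lemma delta_ne_zero (hn : 0 < n) : C.δv ≠ 0 := by
  intro h
  have h2 := congrFun h ⟨0, hn⟩
  simp only [δv, Pi.zero_apply] at h2
  have h3 : C.dz ⟨0, hn⟩ = 0 := by exact_mod_cast h2
  exact (C.dz_pos ⟨0, hn⟩).ne' h3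

/-! #### the endomorphism `c` and the subspace `W` -/

/-- The Coxeter element as a linear endomorphism. -/
def cE : Module.End ℂ (V n) := (C.cox : V n →ₗ[ℂ] V n)

/-- `c - 1` -/
def NN : Module.End ℂ (V n) := C.cE - 1

/-- the image of `(c-1)^2`, on which `c` has finite order -/
def Wsub : Submodule ℂ (V n) := LinearMap.range (C.NN * C.NN)

lemma cE_apply (v : V n) : C.cE v = C.cox v := rfl

lemma NN_apply (v : V n) : C.NN v = C.cox v - v := by
  simp [NN, cE, LinearMap.sub_apply]

lemma commute_cE_NN2 (k : ℕ) : Commute (C.cE ^ k) (C.NN * C.NN) := by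
  have h : Commute C.cE C.NN := (Commute.refl C.cE).sub_right (Commute.one_right C.cE)
  exact (h.mul_right h).pow_left k

lemma cE_pow_mem (k : ℕ) {x : V n} (hx : x ∈ C.Wsub) : (C.cE ^ k) x ∈ C.Wsub := by
  obtain ⟨w, rfl⟩ := hx
  refine ⟨(C.cE ^ k) w, ?_⟩
  rw [← Module.End.mul_apply, ← (C.commute_cE_NN2 k).eq, Module.End.mul_apply]

lemma Hf_cE_pow (k : ℕ) (x y : V n) :
    C.Hf ((C.cE ^ k) x) ((C.cE ^ k) y) = C.Hf x y := by
  induction k with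
  | zero => simp
  | succ k ih =>
    have hp : ∀ z : V n, (C.cE ^ (k+1)) z = C.cox ((C.cE ^ k) z) := by
      intro z; rw [pow_succ', Module.End.mul_apply]; rfl
    rw [hp, hp, C.Hf_cox]
    exact ih

lemma delta_not_mem_W (hn : 0 < n) : C.δv ∉ C.Wsub := by
  rintro ⟨w, hw⟩
  set u : V n := C.NN w with hu
  have hNu : C.NN u = C.δv := by
    rw [hu, ← Module.End.mul_apply]; exact hw
  have hcu : C.cox u = u + C.δv := by
    have h := C.NN_apply u
    rw [hNu] at h
    rw [add_comm]
    exact sub_eq_iff_eq_add.mp h.symm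
  have hcw : C.cox w = w + u := by
    have h := C.NN_apply w
    rw [← hu] at h
    rw [add_comm]
    exact sub_eq_iff_eq_add.mp h.symm
  have h0 : C.Hf u u = 0 := by
    have h1 := C.Hf_cox u w
    rw [hcu, hcw, Hf_add_left, Hf_add_right, Hf_add_right, Hf_delta_left,
      Hf_delta_left] at h1
    -- h1 : Hf u w + Hf u u + (0 + 0) = Hf u w
    linear_combination h1
  obtain ⟨z, hz⟩ := C.Hf_self_eq_zero hn h0
  have : C.δv = 0 := by
    rw [← hNu, hz, map_smul, NN_apply, cox_delta, sub_self, smul_zero]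
  exact C.delta_ne_zero hn this

lemma smul_delta_in_W_eq_zero (hn : 0 < n) {v : V n} (hv : v ∈ C.Wsub)
    {z : ℂ} (heq : v = z • C.δv) : v = 0 := by
  by_cases hz : z = 0
  · rw [heq, hz, zero_smul]
  · exfalso
    apply C.delta_not_mem_W hn
    have : C.δv = z⁻¹ • v := by rw [heq, smul_smul, inv_mul_cancel₀ hz, one_smul]
    rw [this]
    exact Submodule.smul_mem _ _ hv

lemma fixed_in_W_eq_zero (hn : 0 < n) {v : V n} (hv : v ∈ C.Wsub)
    (hfix : C.cox v = v) : v = 0 := by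
  obtain ⟨z, hz⟩ := C.fixed_smul_delta hn hfix
  exact C.smul_delta_in_W_eq_zero hn hv hz

lemma Hf_posdef_W (hn : 0 < n) {v : V n} (hv : v ∈ C.Wsub)
    (h : C.Hf v v = 0) : v = 0 := by
  obtain ⟨z, hz⟩ := C.Hf_self_eq_zero hn h
  exact C.smul_delta_in_W_eq_zero hn hv hz

/-! #### coercivity and finite order on `W` -/

lemma coercive : ∃ ε : ℝ, 0 < ε ∧ ∀ v ∈ C.Wsub, ε * ‖v‖ ^ 2 ≤ (C.Hf v v).re := by
  by_cases hn0 : 0 < n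
  swap
  · refine ⟨1, one_pos, fun v hv => ?_⟩
    have hv0 : v = 0 := by
      funext i; exact absurd i.isLt (by omega)
    simpa [hv0] using C.Hf_self_nonneg 0
  by_cases hW : C.Wsub = ⊥
  · refine ⟨1, one_pos, fun v hv => ?_⟩
    rw [hW, Submodule.mem_bot] at hv
    simpa [hv] using C.Hf_self_nonneg 0
  · set S : Set (V n) := (C.Wsub : Set (V n)) ∩ Metric.sphere 0 1 with hS
    have hScl : IsClosed S :=
      (Submodule.closed_of_finiteDimensional C.Wsub).inter Metric.isClosed_sphere
    have hSb : Bornology.IsBounded S :=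
      (Metric.isBounded_sphere).subset (Set.inter_subset_right)
    have hcomp : IsCompact S := Metric.isCompact_of_isClosed_isBounded hScl hSb
    have hne : S.Nonempty := by
      obtain ⟨v, hvW, hv0⟩ := Submodule.exists_mem_ne_zero_of_ne_bot hW
      refine ⟨(‖v‖ : ℂ)⁻¹ • v, ?_, ?_⟩
      · exact Submodule.smul_mem _ _ hvW
      · have hnv : ‖v‖ ≠ 0 := norm_ne_zero_iff.mpr hv0
        rw [mem_sphere_zero_iff_norm, norm_smul, norm_inv, Complex.norm_real,
          Real.norm_eq_abs, abs_of_nonneg (norm_nonneg v), inv_mul_cancel₀ hnv]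
    have hcont : Continuous fun v : V n => (C.Hf v v).re := by
      refine Complex.continuous_re.comp ?_
      show Continuous fun v : V n =>
        ∑ i, ∑ j, (starRingEnd ℂ) (v i) * v j * ((C.d i : ℂ) * (C.a i j : ℂ))
      refine continuous_finset_sum _ fun i _ => continuous_finset_sum _ fun j _ => ?_
      exact ((Complex.continuous_conj.comp (continuous_apply i)).mul
        (continuous_apply j)).mul continuous_const
    obtain ⟨v0, hv0S, hmin⟩ := hcomp.exists_isMinOn hne hcont.continuousOn
    have hv0W : v0 ∈ C.Wsub := hv0S.1
    have hv0n : ‖v0‖ = 1 := mem_sphere_zero_iff_norm.mp hv0S.2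
    set ε : ℝ := (C.Hf v0 v0).re with hε
    have hεpos : 0 < ε := by
      rcases lt_or_eq_of_le (C.Hf_self_nonneg v0) with h | h
      · exact h
      · exfalso
        have h0 : C.Hf v0 v0 = 0 := by
          apply Complex.ext
          · exact h.symm
          · simpa using C.Hf_self_im v0
        have := C.Hf_posdef_W hn0 hv0W h0
        rw [this, norm_zero] at hv0n
        exact one_ne_zero hv0n.symm
    refine ⟨ε, hεpos, fun v hv => ?_⟩
    by_cases hv0 : v = 0
    · simpa [hv0] using C.Hf_self_nonneg 0
    · have hnv : (0:ℝ) < ‖v‖ := norm_pos_iff.mpr hv0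
      set u : V n := ((‖v‖ : ℝ) : ℂ)⁻¹ • v with hu
      have huS : u ∈ S := by
        refine ⟨Submodule.smul_mem _ _ hv, ?_⟩
        rw [mem_sphere_zero_iff_norm, hu, norm_smul, norm_inv, Complex.norm_real,
          Real.norm_eq_abs, abs_of_nonneg (norm_nonneg v), inv_mul_cancel₀ hnv.ne']
      have hval : (C.Hf u u).re = (‖v‖^2)⁻¹ * (C.Hf v v).re := by
        rw [hu, Hf_smul_left, Hf_smul_right]
        rw [map_inv₀, Complex.conj_ofReal]
        have : (((‖v‖ : ℝ) : ℂ))⁻¹ * ((((‖v‖ : ℝ) : ℂ))⁻¹ * C.Hf v v)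
            = (((‖v‖^2 : ℝ) : ℂ))⁻¹ * C.Hf v v := by
          push_cast
          field_simp
        rw [this, ← Complex.ofReal_inv, Complex.re_ofReal_mul]
      have hle : ε ≤ (C.Hf u u).re := hmin huS
      rw [hval] at hle
      have h2 : ε * ‖v‖^2 ≤ (‖v‖^2)⁻¹ * (C.Hf v v).re * ‖v‖^2 := by
        exact mul_le_mul_of_nonneg_right hle (by positivity)
      calc ε * ‖v‖^2 ≤ (‖v‖^2)⁻¹ * (C.Hf v v).re * ‖v‖^2 := h2
        _ = (C.Hf v v).re := by field_simp

/-! #### integer vectors -/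

/-- a vector with integer coordinates -/
def IntVec (v : V n) : Prop := ∀ i, ∃ m : ℤ, v i = (m : ℂ)

lemma intVec_alpha (j : Fin n) : IntVec (α j : V n) := by
  intro i
  refine ⟨if i = j then 1 else 0, ?_⟩
  simp only [α, Pi.single_apply]
  split <;> simp

lemma intVec_K {v : V n} (hv : IntVec v) (i : Fin n) :
    ∃ m : ℤ, C.K (C.coroot i) v = (m : ℂ) := by
  choose f hf using hv
  refine ⟨∑ j, C.a i j * f j, ?_⟩
  rw [K_coroot_apply]
  push_cast
  exact Finset.sum_congr rfl fun j _ => by rw [hf j]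

lemma intVec_sLin {v : V n} (hv : IntVec v) (i : Fin n) : IntVec (C.sLin i v) := by
  obtain ⟨M, hM⟩ := C.intVec_K hv i
  intro k
  obtain ⟨mk, hmk⟩ := hv k
  refine ⟨mk - (if k = i then M else 0), ?_⟩
  rw [sLin_apply_coord, hmk, hM]
  split <;> push_cast <;> ring

lemma intVec_SL (l : List (Fin n)) {v : V n} (hv : IntVec v) : IntVec (C.SL l v) := by
  induction l with
  | nil => simpa [SL_nil] using hv
  | cons i l ih =>
    intro k
    rw [SL_cons]
    exact C.intVec_sLin ih i k

lemma intVec_cox {v : V n} (hv : IntVec v) : IntVec (C.cox v) := by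
  intro k
  rw [C.cox_eq_SL]
  exact C.intVec_SL _ hv k

lemma intVec_sub {v w : V n} (hv : IntVec v) (hw : IntVec w) : IntVec (v - w) := by
  intro k
  obtain ⟨a, ha⟩ := hv k
  obtain ⟨b, hb⟩ := hw k
  exact ⟨a - b, by simp [ha, hb]⟩

lemma intVec_NN {v : V n} (hv : IntVec v) : IntVec (C.NN v) := by
  rw [NN_apply]
  exact intVec_sub (C.intVec_cox hv) hv

lemma intVec_cE_pow (k : ℕ) {v : V n} (hv : IntVec v) : IntVec ((C.cE ^ k) v) := by
  induction k with
  | zero => simpa using hv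
  | succ k ih =>
    have hp : (C.cE ^ (k+1)) v = C.cox ((C.cE ^ k) v) := by
      rw [pow_succ', Module.End.mul_apply]; rfl
    rw [hp]
    exact C.intVec_cox ih

/-- the generators of `W` -/
def yv (j : Fin n) : V n := (C.NN * C.NN) (α j)

lemma yv_mem (j : Fin n) : C.yv j ∈ C.Wsub := ⟨α j, rfl⟩

lemma yv_int (j : Fin n) : IntVec (C.yv j) := by
  show IntVec (C.NN (C.NN (α j)))
  exact C.intVec_NN (C.intVec_NN (intVec_alpha j))

lemma exists_dup (hn : 0 < n) :
    ∃ k l : ℕ, k < l ∧ ∀ j : Fin n, (C.cE ^ k) (C.yv j) = (C.cE ^ l) (C.yv j) := by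
  classical
  obtain ⟨ε, hε, hco⟩ := C.coercive
  set R : ℝ := ∑ j, (C.Hf (C.yv j) (C.yv j)).re with hR
  have hRj : ∀ j, (C.Hf (C.yv j) (C.yv j)).re ≤ R :=
    fun j => Finset.single_le_sum (fun i _ => C.Hf_self_nonneg (C.yv i)) (Finset.mem_univ j)
  set B : ℝ := Real.sqrt (R / ε) with hB
  have hnorm : ∀ (k : ℕ) (j : Fin n), ‖(C.cE ^ k) (C.yv j)‖ ≤ B := by
    intro k j
    have h1 : ε * ‖(C.cE ^ k) (C.yv j)‖ ^ 2 ≤ (C.Hf ((C.cE ^ k) (C.yv j)) ((C.cE ^ k) (C.yv j))).re :=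
      hco _ (C.cE_pow_mem k (C.yv_mem j))
    rw [C.Hf_cE_pow] at h1
    have h2 : ‖(C.cE ^ k) (C.yv j)‖ ^ 2 ≤ R / ε := by
      rw [le_div_iff₀ hε]
      calc ‖(C.cE ^ k) (C.yv j)‖ ^ 2 * ε = ε * ‖(C.cE ^ k) (C.yv j)‖ ^ 2 := by ring
        _ ≤ _ := h1
        _ ≤ R := hRj j
    have hRnn : 0 ≤ R := Finset.sum_nonneg fun j _ => C.Hf_self_nonneg (C.yv j)
    rw [hB]
    exact (Real.le_sqrt (norm_nonneg _) (div_nonneg hRnn hε.le)).mpr h2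
  set Bz : ℤ := ⌈B⌉ with hBz
  have hint : ∀ (k : ℕ) (j : Fin n), IntVec ((C.cE ^ k) (C.yv j)) :=
    fun k j => C.intVec_cE_pow k (C.yv_int j)
  have hmem : ∀ (k : ℕ) (j i : Fin n),
      Classical.choose (hint k j i) ∈ Finset.Icc (-Bz) Bz := by
    intro k j i
    set mz : ℤ := Classical.choose (hint k j i) with hmz
    have hspec : ((C.cE ^ k) (C.yv j)) i = (mz : ℂ) := Classical.choose_spec (hint k j i)
    have h1 : ‖((C.cE ^ k) (C.yv j)) i‖ ≤ B :=
      le_trans (norm_le_pi_norm _ i) (hnorm k j)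
    rw [hspec] at h1
    have h2 : |(mz : ℝ)| ≤ B := by
      rwa [show ((mz : ℂ)) = (((mz : ℝ) : ℝ) : ℂ) by push_cast; ring, Complex.norm_real,
        Real.norm_eq_abs] at h1
    have h3 : |(mz : ℝ)| ≤ (Bz : ℝ) := le_trans h2 (Int.le_ceil B)
    have h4 : -(Bz : ℝ) ≤ (mz : ℝ) ∧ (mz : ℝ) ≤ (Bz : ℝ) := abs_le.mp h3
    rw [Finset.mem_Icc]
    constructor
    · exact_mod_cast h4.1
    · exact_mod_cast h4.2
  set F : ℕ → Fin n → Fin n → {z : ℤ // z ∈ Finset.Icc (-Bz) Bz} :=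
    fun k j i => ⟨Classical.choose (hint k j i), hmem k j i⟩ with hF
  obtain ⟨k, l, hkl, hFeq⟩ := Finite.exists_ne_map_eq_of_infinite F
  have heq : ∀ j : Fin n, (C.cE ^ k) (C.yv j) = (C.cE ^ l) (C.yv j) := by
    intro j
    funext i
    have h1 : ((C.cE ^ k) (C.yv j)) i = ((Classical.choose (hint k j i) : ℤ) : ℂ) :=
      Classical.choose_spec (hint k j i)
    have h2 : ((C.cE ^ l) (C.yv j)) i = ((Classical.choose (hint l j i) : ℤ) : ℂ) :=
      Classical.choose_spec (hint l j i)
    have h3 : (F k j i : ℤ) = (F l j i : ℤ) := by rw [hFeq]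
    rw [h1, h2]
    exact congrArg (fun z : ℤ => (z : ℂ)) h3
  rcases hkl.lt_or_gt with h | h
  · exact ⟨k, l, h, heq⟩
  · exact ⟨l, k, h, fun j => (heq j).symm⟩

lemma exists_pow_fix (hn : 0 < n) :
    ∃ m : ℕ, 0 < m ∧ ∀ x ∈ C.Wsub, (C.cE ^ m) x = x := by
  obtain ⟨k, l, hkl, heq⟩ := C.exists_dup hn
  have hinjc : Function.Injective ⇑C.cE := by
    have : ⇑C.cE = ⇑C.cox := rfl
    rw [this]
    exact C.cox.injective
  have hinj : Function.Injective ⇑(C.cE ^ k) := by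
    rw [Module.End.coe_pow]
    exact Function.Injective.iterate hinjc k
  have hfixy : ∀ j : Fin n, (C.cE ^ (l - k)) (C.yv j) = C.yv j := by
    intro j
    apply hinj
    rw [← Module.End.mul_apply, ← pow_add]
    rw [show k + (l - k) = l by omega]
    exact (heq j).symm
  refine ⟨l - k, by omega, ?_⟩
  rintro x ⟨w, rfl⟩
  have hα : ∀ i : Fin n, (fun j => if i = j then (1:ℂ) else 0) = α i := by
    intro i
    funext j
    simp [α, Pi.single_apply, eq_comm]
  have hw : (C.NN * C.NN) w = ∑ i, w i • C.yv i := by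
    conv_lhs => rw [pi_eq_sum_univ w]
    rw [map_sum]
    refine Finset.sum_congr rfl fun i _ => ?_
    rw [map_smul, hα i]
    rfl
  rw [hw, map_sum]
  refine Finset.sum_congr rfl fun i _ => ?_
  rw [map_smul, hfixy i]

/-! #### roots of unity and sums over them -/

lemma sum_pow_nthRoots {m : ℕ} (hm : 0 < m) {j : ℕ} (h1 : 0 < j) (h2 : j < m) :
    ∑ ζ ∈ Polynomial.nthRootsFinset m (1 : ℂ), ζ ^ j = 0 := by
  obtain ⟨ω, hω⟩ : ∃ ω : ℂ, IsPrimitiveRoot ω m :=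
    ⟨_, Complex.isPrimitiveRoot_exp m hm.ne'⟩
  have hω0 : ω ≠ 0 := hω.ne_zero hm.ne'
  set Rf := Polynomial.nthRootsFinset m (1 : ℂ) with hRf
  have himg : Rf.image (fun ζ => ω * ζ) = Rf := by
    apply Finset.eq_of_subset_of_card_le
    · intro x hx
      obtain ⟨ζ, hζ, rfl⟩ := Finset.mem_image.mp hx
      rw [Polynomial.mem_nthRootsFinset hm] at hζ ⊢
      rw [mul_pow, hζ, hω.pow_eq_one, one_mul]
    · rw [Finset.card_image_of_injective _ (mul_right_injective₀ hω0)]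
  have hstep : ∑ ζ ∈ Rf, ζ ^ j = ω ^ j * ∑ ζ ∈ Rf, ζ ^ j := by
    conv_lhs => rw [← himg]
    rw [Finset.sum_image (fun a _ b _ h => mul_right_injective₀ hω0 h)]
    rw [Finset.mul_sum]
    exact Finset.sum_congr rfl fun ζ _ => by rw [mul_pow]
  have hne : ω ^ j ≠ 1 := hω.pow_ne_one_of_pos_of_lt h1.ne' h2
  have : (ω ^ j - 1) * ∑ ζ ∈ Rf, ζ ^ j = 0 := by
    rw [sub_mul, one_mul, ← hstep, sub_self]
  rcases mul_eq_zero.mp this with h | h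
  · exact absurd (sub_eq_zero.mp h) hne
  · exact h

lemma card_nthRoots (m : ℕ) (hm : 0 < m) :
    (Polynomial.nthRootsFinset m (1 : ℂ)).card = m :=
  (Complex.isPrimitiveRoot_exp m hm.ne').card_nthRootsFinset

lemma ker_comp_le_two {M : Type*} [AddCommGroup M] [Module ℂ M] [FiniteDimensional ℂ M]
    (f : M →ₗ[ℂ] M) (u : M) (hu : u ≠ 0)
    (hker : ∀ x : M, f x = 0 → x ∈ Submodule.span ℂ {u}) :
    Module.finrank ℂ (LinearMap.ker (f ∘ₗ f)) ≤ 2 := by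
  classical
  set p : Submodule ℂ M := LinearMap.ker (f ∘ₗ f) with hp
  set φ : p →ₗ[ℂ] M := f.comp p.subtype with hφ
  have hrn := LinearMap.finrank_range_add_finrank_ker φ
  have hδ : Module.finrank ℂ (Submodule.span ℂ ({u} : Set M)) = 1 :=
    finrank_span_singleton hu
  have hrange : Module.finrank ℂ (LinearMap.range φ) ≤ 1 := by
    have hle : LinearMap.range φ ≤ Submodule.span ℂ {u} := by
      rintro _ ⟨x, rfl⟩
      refine hker _ ?_
      exact LinearMap.mem_ker.mp x.property
    exact hδ ▸ Submodule.finrank_mono hle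
  have hkerφ : Module.finrank ℂ (LinearMap.ker φ) ≤ 1 := by
    set ψ : LinearMap.ker φ →ₗ[ℂ] M := p.subtype.comp (LinearMap.ker φ).subtype with hψ
    have hinj : Function.Injective ⇑ψ := by
      intro a b hab
      apply Subtype.ext
      apply Subtype.ext
      exact hab
    have heqrk : Module.finrank ℂ (LinearMap.range ψ) = Module.finrank ℂ (LinearMap.ker φ) :=
      LinearMap.finrank_range_of_inj hinj
    have hle : LinearMap.range ψ ≤ Submodule.span ℂ {u} := by
      rintro _ ⟨x, rfl⟩
      refine hker _ ?_
      exact LinearMap.mem_ker.mp x.property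
    calc Module.finrank ℂ (LinearMap.ker φ)
        = Module.finrank ℂ (LinearMap.range ψ) := heqrk.symm
      _ ≤ 1 := hδ ▸ Submodule.finrank_mono hle
  omega

lemma finrank_ker_le (hn : 0 < n) :
    Module.finrank ℂ (LinearMap.ker (C.NN * C.NN)) ≤ 2 := by
  have hker : ∀ x : V n, C.NN x = 0 → x ∈ Submodule.span ℂ {C.δv} := by
    intro x hx
    have hfix : C.cox x = x := by
      have h := C.NN_apply x
      rw [hx] at h
      exact sub_eq_zero.mp h.symm
    obtain ⟨z, hz⟩ := C.fixed_smul_delta hn hfix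
    exact Submodule.mem_span_singleton.mpr ⟨z, hz.symm⟩
  have h := ker_comp_le_two C.NN C.δv (C.delta_ne_zero hn) hker
  rwa [Module.End.mul_eq_comp]

lemma finrank_W (hn : 0 < n) : n - 2 ≤ Module.finrank ℂ C.Wsub := by
  have h1 := LinearMap.finrank_range_add_finrank_ker (C.NN * C.NN)
  have h2 : Module.finrank ℂ (V n) = n := by
    rw [Module.finrank_pi ℂ, Fintype.card_fin]
  have h3 := C.finrank_ker_le hn
  have h4 : Module.finrank ℂ C.Wsub = Module.finrank ℂ (LinearMap.range (C.NN * C.NN)) := rfl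
  omega

end Prop313

/-- Proposition 3.1(3): `c` has a linearly independent set of `n - 2` eigenvectors
whose eigenvalues are roots of unity different from `1`. -/
theorem eigenvectors_roots_of_unity {n : ℕ} (C : AffineGCM n) :
    ∃ (v : Fin (n - 2) → V n) (μ : Fin (n - 2) → ℂ), LinearIndependent ℂ v ∧
      ∀ i, C.cox (v i) = μ i • v i ∧ μ i ≠ 1 ∧ ∃ m : ℕ, 0 < m ∧ μ i ^ m = 1 := by
  classical
  rcases Nat.lt_or_ge n 3 with hsmall | hbig
  · haveI : IsEmpty (Fin (n - 2)) := ⟨fun i => absurd i.isLt (by omega)⟩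
    exact ⟨fun _ => 0, fun _ => 1, linearIndependent_empty_type, fun i => isEmptyElim i⟩
  have hn : 0 < n := by omega
  obtain ⟨m, hm0, hmfix⟩ := C.exists_pow_fix hn
  have hmC : (m : ℂ) ≠ 0 := Nat.cast_ne_zero.mpr hm0.ne'
  set G : Set (V n) :=
    {u | u ≠ 0 ∧ ∃ μ : ℂ, C.cox u = μ • u ∧ μ ≠ 1 ∧ μ ^ m = 1} with hG
  -- every element of W is in the span of good eigenvectors
  have hWG : C.Wsub ≤ Submodule.span ℂ G := by
    intro x hx
    set P : ℂ → V n := fun ζ => ∑ j ∈ Finset.range m, (ζ⁻¹) ^ j • ((C.cE ^ j) x) with hP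
    have hPW : ∀ ζ, P ζ ∈ C.Wsub := fun ζ =>
      Submodule.sum_mem _ fun j _ => Submodule.smul_mem _ _ (C.cE_pow_mem j hx)
    have hPmem : ∀ ζ ∈ Polynomial.nthRootsFinset m (1 : ℂ), P ζ ∈ Submodule.span ℂ G := by
      intro ζ hζ
      have hζm : ζ ^ m = 1 := (Polynomial.mem_nthRootsFinset hm0 1).mp hζ
      have hζ0 : ζ ≠ 0 := by
        intro h
        rw [h, zero_pow hm0.ne'] at hζm
        exact zero_ne_one hζm
      have heig : C.cox (P ζ) = ζ • P ζ := by
        set g : ℕ → V n := fun j => (ζ * (ζ⁻¹) ^ j) • ((C.cE ^ j) x) with hg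
        have hlhs : C.cox (P ζ) = ∑ j ∈ Finset.range m, g (j + 1) := by
          rw [hP, map_sum]
          refine Finset.sum_congr rfl fun j _ => ?_
          rw [map_smul, hg]
          have h1 : C.cox ((C.cE ^ j) x) = (C.cE ^ (j+1)) x := by
            rw [pow_succ', Module.End.mul_apply]; rfl
          rw [h1]
          congr 1
          rw [pow_succ]
          field_simp
        have hrhs : ζ • P ζ = ∑ j ∈ Finset.range m, g j := by
          rw [hP, Finset.smul_sum]
          refine Finset.sum_congr rfl fun j _ => ?_
          rw [smul_smul, hg]
        have hgm : g 0 = g m := by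
          have h0 : g 0 = ζ • x := by
            simp only [hg, pow_zero, mul_one, Module.End.one_apply]
          have hm : g m = ζ • x := by
            simp only [hg]
            rw [inv_pow, hζm, inv_one, mul_one, hmfix x hx]
          rw [h0, hm]
        have h1 : ∑ j ∈ Finset.range (m+1), g j = (∑ j ∈ Finset.range m, g (j+1)) + g 0 :=
          Finset.sum_range_succ' g m
        have h2 : ∑ j ∈ Finset.range (m+1), g j = (∑ j ∈ Finset.range m, g j) + g m :=
          Finset.sum_range_succ g m
        rw [hlhs, hrhs]
        have h3 : (∑ j ∈ Finset.range m, g (j+1)) + g 0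
            = (∑ j ∈ Finset.range m, g j) + g 0 := by
          rw [← h1, hgm, h2]
        exact add_right_cancel h3
      by_cases hP0 : P ζ = 0
      · rw [hP0]; exact Submodule.zero_mem _
      · refine Submodule.subset_span ⟨hP0, ζ, heig, ?_, hζm⟩
        intro h1
        apply hP0
        apply C.fixed_in_W_eq_zero hn (hPW ζ)
        rw [heig, h1, one_smul]
    have hsum : ∑ ζ ∈ Polynomial.nthRootsFinset m (1 : ℂ), P ζ = (m : ℂ) • x := by
      rw [hP, Finset.sum_comm]
      have hterm : ∀ j ∈ Finset.range m,
          (∑ ζ ∈ Polynomial.nthRootsFinset m (1 : ℂ), (ζ⁻¹) ^ j • ((C.cE ^ j) x))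
            = (if j = 0 then (m : ℂ) else 0) • ((C.cE ^ j) x) := by
        intro j hj
        rw [← Finset.sum_smul]
        congr 1
        rcases eq_or_ne j 0 with rfl | hj0
        · rw [if_pos rfl]
          simp only [pow_zero]
          rw [Finset.sum_const, card_nthRoots m hm0, nsmul_eq_mul, mul_one]
        · rw [if_neg hj0]
          have hjm : j < m := Finset.mem_range.mp hj
          have hconv : ∀ ζ ∈ Polynomial.nthRootsFinset m (1 : ℂ), (ζ⁻¹) ^ j = ζ ^ (m - j) := by
            intro ζ hζ
            have hζm : ζ ^ m = 1 := (Polynomial.mem_nthRootsFinset hm0 1).mp hζ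
            have hmul : ζ ^ (m - j) * ζ ^ j = 1 := by
              rw [← pow_add, Nat.sub_add_cancel hjm.le, hζm]
            rw [inv_pow]
            exact (eq_inv_of_mul_eq_one_left hmul).symm
          rw [Finset.sum_congr rfl hconv]
          exact sum_pow_nthRoots hm0 (by omega) (by omega)
      rw [Finset.sum_congr rfl hterm]
      rw [Finset.sum_eq_single_of_mem 0 (Finset.mem_range.mpr hm0)]
      · simp
      · intro j _ hj0
        rw [if_neg hj0, zero_smul]
    have hxeq : x = (m : ℂ)⁻¹ • ∑ ζ ∈ Polynomial.nthRootsFinset m (1 : ℂ), P ζ := by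
      rw [hsum, smul_smul, inv_mul_cancel₀ hmC, one_smul]
    rw [hxeq]
    exact Submodule.smul_mem _ _ (Submodule.sum_mem _ fun ζ hζ => hPmem ζ hζ)
  -- dimension count and selection of independent eigenvectors
  have hrank : n - 2 ≤ Module.finrank ℂ (Submodule.span ℂ G) :=
    le_trans (C.finrank_W hn) (Submodule.finrank_mono hWG)
  obtain ⟨b, hbG, hbspan, hbli⟩ := exists_linearIndependent ℂ G
  have hbfin : b.Finite := hbli.setFinite
  haveI : Fintype b := hbfin.fintype
  have hcard : n - 2 ≤ b.toFinset.card := by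
    rw [← hbspan] at hrank
    rwa [finrank_span_set_eq_card hbli] at hrank
  have hemb : Nonempty (Fin (n - 2) ↪ b) := by
    apply Function.Embedding.nonempty_of_card_le
    rw [Fintype.card_fin, ← Set.toFinset_card]
    exact hcard
  obtain ⟨e⟩ := hemb
  have hprop : ∀ i : Fin (n - 2), ((e i : V n) ∈ G) := fun i => hbG (e i).2
  refine ⟨fun i => (e i : V n), fun i => Classical.choose (hprop i).2, ?_, ?_⟩
  · exact hbli.comp e e.injective
  · intro i
    obtain ⟨h1, h2, h3⟩ := Classical.choose_spec (hprop i).2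
    exact ⟨h1, h2, m, hm0, h3⟩

end AffineGCM
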